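/- arXiv:2203.10861 — 5 statements merged into one kernel-verified Lean document; each statement's English description precedes it below -/
import Mathlib

section
/- Let n ≥ 1 and let U be an open neighborhood of the origin in ℝⁿ (identified with Fin n → ℝ). There is no function g : ℝⁿ → ℝ that is continuously differentiable on U (e.g. ContDiffOn ℝ 1 g U) and satisfies Dg(x)(x) = n, i.e. \sum_{i=1}^n x_i ∂g/∂x_i(x) = n, for every x ∈ U with x ≠ 0. -/
open Topology Filter


/-- Let `n ≥ 1` and let `U` be an open neighborhood of the origin in `ℝⁿ`.
There is no function `g : ℝⁿ → ℝ` that is continuously differentiable on `U` and satisfies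
`Dg(x)(x) = n`, i.e. `∑ᵢ xᵢ ∂g/∂xᵢ(x) = n`, for every `x ∈ U` with `x ≠ 0`. -/
theorem stmt_1 (n : ℕ) (hn : 1 ≤ n) (U : Set (Fin n → ℝ)) (hU : IsOpen U)
    (h0 : (0 : Fin n → ℝ) ∈ U) :
    ¬ ∃ g : (Fin n → ℝ) → ℝ, ContDiffOn ℝ 1 g U ∧
      ∀ x ∈ U, x ≠ 0 → fderiv ℝ g x x = (n : ℝ) := by
  rintro ⟨g, hg, hval⟩
  haveI : Nonempty (Fin n) := ⟨⟨0, hn⟩⟩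
  haveI : Nontrivial (Fin n → ℝ) := inferInstance
  have hcont : ContinuousOn (fderiv ℝ g) U := hg.continuousOn_fderiv_of_isOpen hU le_rfl
  have hh : ContinuousOn (fun x => fderiv ℝ g x x) U := hcont.clm_apply continuousOn_id
  have h1 : Filter.Tendsto (fun x => fderiv ℝ g x x) (𝓝 (0 : Fin n → ℝ))
      (𝓝 (fderiv ℝ g 0 0)) := (hh.continuousAt (hU.mem_nhds h0)).tendsto
  have h0' : Filter.Tendsto (fun x => fderiv ℝ g x x) (𝓝[≠] (0 : Fin n → ℝ)) (𝓝 0) := by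
    simpa using h1.mono_left nhdsWithin_le_nhds
  have h2 : Filter.Tendsto (fun x => fderiv ℝ g x x) (𝓝[≠] (0 : Fin n → ℝ)) (𝓝 (n : ℝ)) := by
    apply Filter.Tendsto.congr' _ tendsto_const_nhds
    filter_upwards [self_mem_nhdsWithin, nhdsWithin_le_nhds (hU.mem_nhds h0)] with x hx hxU
    exact (hval x hxU hx).symm
  have hne : ((n : ℝ)) ≠ 0 := Nat.cast_ne_zero.mpr (by omega)
  exact hne (tendsto_nhds_unique h2 h0')
end

section
/- Let U be an open subset of ℝ³ containing a point (0, 0, z₀) of the z-axis. There is no function g : ℝ³ → ℝ that is continuously differentiable on U (e.g. ContDiffOn ℝ 1 g U) and satisfies −x·∂g/∂x(x,y,z) − y·∂g/∂y(x,y,z) = −2 for every (x,y,z) ∈ U with (x,y) ≠ (0,0). -/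
/-- Let `U` be an open subset of `ℝ³` containing a point `(0, 0, z₀)` of the `z`-axis.
There is no function `g : ℝ³ → ℝ` that is continuously differentiable on `U` and satisfies
`−x·∂g/∂x(x,y,z) − y·∂g/∂y(x,y,z) = −2` for every `(x,y,z) ∈ U` with `(x,y) ≠ (0,0)`. -/
theorem stmt_5 (U : Set (ℝ × ℝ × ℝ)) (hU : IsOpen U) (z₀ : ℝ) (hz : ((0 : ℝ), (0 : ℝ), z₀) ∈ U) :
    ¬ ∃ g : ℝ × ℝ × ℝ → ℝ, ContDiffOn ℝ 1 g U ∧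
      ∀ p ∈ U, (p.1, p.2.1) ≠ ((0 : ℝ), (0 : ℝ)) →
        fderiv ℝ g p (-p.1, -p.2.1, 0) = -2 := by
  rintro ⟨g, hg, hpde⟩
  set p₀ : ℝ × ℝ × ℝ := (0, 0, z₀) with hp₀
  have hF : ContinuousOn (fun p => fderiv ℝ g p) U :=
    hg.continuousOn_fderiv_of_isOpen hU le_rfl
  have hFa : ContinuousAt (fun p => fderiv ℝ g p) p₀ :=
    hF.continuousAt (hU.mem_nhds hz)
  set M : ℝ := ‖fderiv ℝ g p₀‖ + 1 with hM
  have hMpos : 0 < M := by positivity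
  have hev : ∀ᶠ p in nhds p₀, ‖fderiv ℝ g p‖ < M := by
    have : ContinuousAt (fun p => ‖fderiv ℝ g p‖) p₀ := hFa.norm
    exact this.eventually_lt continuousAt_const (by simp [hM])
  have hevU : ∀ᶠ p in nhds p₀, p ∈ U ∧ ‖fderiv ℝ g p‖ < M :=
    (hU.eventually_mem hz).and hev
  obtain ⟨δ, hδ, hball⟩ := Metric.eventually_nhds_iff_ball.1 hevU
  set ε : ℝ := min (δ / 2) (1 / M) with hε
  have hεpos : 0 < ε := lt_min (by linarith) (by positivity)
  set p : ℝ × ℝ × ℝ := (ε, 0, z₀) with hp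
  have hdist : dist p p₀ < δ := by
    have : dist p p₀ = ε := by
      simp [Prod.dist_eq, hp, hp₀, Real.dist_eq, abs_of_pos hεpos, hεpos.le]
    rw [this]
    exact lt_of_le_of_lt (min_le_left _ _) (by linarith)
  obtain ⟨hpU, hpM⟩ := hball p (Metric.mem_ball.2 hdist)
  have hne : ((p.1, p.2.1) : ℝ × ℝ) ≠ (0, 0) := by
    simp [hp]
    exact ne_of_gt hεpos
  have heq := hpde p hpU hne
  have hvnorm : ‖((-p.1, -p.2.1, 0) : ℝ × ℝ × ℝ)‖ = ε := by
    simp [Prod.norm_def, hp, abs_of_pos hεpos, hεpos.le]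
  have hle : ‖fderiv ℝ g p (-p.1, -p.2.1, 0)‖ ≤ ‖fderiv ℝ g p‖ * ε := by
    rw [← hvnorm]
    exact (fderiv ℝ g p).le_opNorm _
  rw [heq] at hle
  have h2 : (2 : ℝ) ≤ ‖fderiv ℝ g p‖ * ε := by
    simpa using hle
  have hεle : ε ≤ 1 / M := min_le_right _ _
  have hle2 : ‖fderiv ℝ g p‖ * ε ≤ M * (1 / M) :=
    mul_le_mul hpM.le hεle hεpos.le hMpos.le
  rw [mul_one_div_cancel hMpos.ne'] at hle2
  linarith
end

section
/- Let n ≥ 1 and let f : ℝ → ℝ be continuously differentiable with f(0) = 0 and f'(0) ≠ 0. Let U be an open subset of ℝⁿ (identified with Fin n → ℝ) containing a point p with first coordinate p_1 = 0. Then there is no function g : ℝⁿ → ℝ that is continuously differentiable on U and satisfies f(x_1)·∂g/∂x_1(x) = f'(x_1) for every x ∈ U with x_1 ≠ 0. -/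
/-- Let `n ≥ 1` and `f : ℝ → ℝ` be `C¹` with `f(0) = 0` and `f'(0) ≠ 0`. Let `U ⊆ ℝⁿ` be open
containing a point `p` with first coordinate `0`. Then there is no function `g : ℝⁿ → ℝ`
that is `C¹` on `U` and satisfies `f(x₁)·∂g/∂x₁(x) = f'(x₁)` for every `x ∈ U` with `x₁ ≠ 0`. -/
theorem stmt_6 (n : ℕ) (hn : 1 ≤ n) (f : ℝ → ℝ) (hf : ContDiff ℝ 1 f) (hf0 : f 0 = 0)
    (hf'0 : deriv f 0 ≠ 0) (U : Set (Fin n → ℝ)) (hU : IsOpen U) (p : Fin n → ℝ)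
    (hp : p ∈ U) (hp1 : p ⟨0, hn⟩ = 0) :
    ¬ ∃ g : (Fin n → ℝ) → ℝ, ContDiffOn ℝ 1 g U ∧
      ∀ x ∈ U, x ⟨0, hn⟩ ≠ 0 →
        f (x ⟨0, hn⟩) * fderiv ℝ g x (Pi.single ⟨0, hn⟩ 1) = deriv f (x ⟨0, hn⟩) := by
  rintro ⟨g, hg, h2⟩
  set e : Fin n := ⟨0, hn⟩ with he
  -- continuity ingredients
  have hfd : ContinuousOn (fun x => fderiv ℝ g x) U :=
    hg.continuousOn_fderiv_of_isOpen hU le_rfl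
  have hfc : Continuous f := hf.continuous
  have hdc : Continuous (deriv f) := hf.continuous_deriv le_rfl
  have hcoord : Continuous fun x : Fin n → ℝ => x e := continuous_apply e
  set H : (Fin n → ℝ) → ℝ :=
    fun x => f (x e) * fderiv ℝ g x (Pi.single e 1) - deriv f (x e) with hH
  have hHcont : ContinuousOn H U := by
    apply ContinuousOn.sub
    · exact ((hfc.comp hcoord).continuousOn).mul (hfd.clm_apply continuousOn_const)
    · exact (hdc.comp hcoord).continuousOn
  have hHp : H p = - deriv f 0 := by
    simp [hH, hp1, hf0]
  -- curve through p
  set φ : ℝ → (Fin n → ℝ) := fun t => Function.update p e t with hφdef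
  have hφc : Continuous φ := continuous_const.update e continuous_id
  have hφ0 : φ 0 = p := by
    rw [hφdef]; simp [← hp1, Function.update_eq_self e p]
  have hφt : Filter.Tendsto φ (nhdsWithin 0 {(0:ℝ)}ᶜ) (nhds p) := by
    have := hφc.tendsto 0
    rw [hφ0] at this
    exact this.mono_left nhdsWithin_le_nhds
  have hHat : ContinuousAt H p := hHcont.continuousAt (hU.mem_nhds hp)
  have hlim : Filter.Tendsto (fun t => H (φ t)) (nhdsWithin 0 {(0:ℝ)}ᶜ) (nhds (H p)) :=
    (hHat.tendsto).comp hφt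
  -- eventually H (φ t) = 0
  have hmem : ∀ᶠ t in nhdsWithin 0 {(0:ℝ)}ᶜ, φ t ∈ U := by
    have : ∀ᶠ t in nhds (0:ℝ), φ t ∈ U := by
      have := hφc.tendsto 0
      rw [hφ0] at this
      exact this.eventually_mem (hU.mem_nhds hp)
    exact this.filter_mono nhdsWithin_le_nhds
  have hzero : ∀ᶠ t in nhdsWithin 0 {(0:ℝ)}ᶜ, H (φ t) = 0 := by
    filter_upwards [hmem, self_mem_nhdsWithin] with t htU ht0
    have hte : φ t e = t := Function.update_self e t p
    have := h2 (φ t) htU (by rw [hte]; exact ht0)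
    simp only [hH]
    rw [hte, sub_eq_zero]
    exact this
  have hlim0 : Filter.Tendsto (fun t => H (φ t)) (nhdsWithin 0 {(0:ℝ)}ᶜ) (nhds 0) :=
    Filter.Tendsto.congr' (Filter.EventuallyEq.symm hzero) tendsto_const_nhds
  have : H p = 0 := tendsto_nhds_unique hlim hlim0
  rw [hHp] at this
  exact hf'0 (neg_eq_zero.mp this)
end

section
/- There is no continuous map η : ℝ³ → ℝ³ such that η(p) ≠ 0 for every p ∈ ℝ³, and such that for every p = (x,y,z) with (x,y) ≠ (0,0) there exists a scalar c ∈ ℝ with η(p) = c·(y, −x, 0). -/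
private lemma cont_zero_off (f : ℝ → ℝ) (hf : Continuous f) (h : ∀ t : ℝ, t ≠ 0 → f t = 0) :
    f 0 = 0 := by
  have h1 : Filter.Tendsto f (nhdsWithin 0 {(0:ℝ)}ᶜ) (nhds (f 0)) :=
    (hf.tendsto 0).mono_left nhdsWithin_le_nhds
  have h2 : Filter.Tendsto f (nhdsWithin 0 {(0:ℝ)}ᶜ) (nhds 0) := by
    refine Filter.Tendsto.congr' ?_ tendsto_const_nhds
    filter_upwards [self_mem_nhdsWithin] with t ht
    exact (h t ht).symm
  exact tendsto_nhds_unique h1 h2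

/-- There is no continuous map `η : ℝ³ → ℝ³` such that `η(p) ≠ 0` for every `p`, and such that
for every `p = (x,y,z)` with `(x,y) ≠ (0,0)` there exists a scalar `c ∈ ℝ`
with `η(p) = c·(y, −x, 0)`. -/
theorem stmt_8 :
    ¬ ∃ η : ℝ × ℝ × ℝ → ℝ × ℝ × ℝ, Continuous η ∧ (∀ p, η p ≠ 0) ∧
      ∀ p : ℝ × ℝ × ℝ, (p.1, p.2.1) ≠ ((0 : ℝ), (0 : ℝ)) →
        ∃ c : ℝ, η p = c • ((p.2.1, -p.1, 0) : ℝ × ℝ × ℝ) := by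
  rintro ⟨η, hcont, hnz, hpar⟩
  have cx : Continuous (fun t : ℝ => ((t, 0, 0) : ℝ × ℝ × ℝ)) := by fun_prop
  have cy : Continuous (fun t : ℝ => ((0, t, 0) : ℝ × ℝ × ℝ)) := by fun_prop
  -- first component vanishes along x-axis
  have h1 : (η (0,0,0)).1 = 0 := by
    refine cont_zero_off (fun t => (η (t,0,0)).1) (by fun_prop) (fun t ht => ?_)
    obtain ⟨c, hc⟩ := hpar (t,0,0) (by simp [ht])
    beta_reduce; rw [hc]; simp
  have h3 : (η (0,0,0)).2.2 = 0 := by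
    refine cont_zero_off (fun t => (η (t,0,0)).2.2) (by fun_prop) (fun t ht => ?_)
    obtain ⟨c, hc⟩ := hpar (t,0,0) (by simp [ht])
    beta_reduce; rw [hc]; simp
  have h2 : (η (0,0,0)).2.1 = 0 := by
    refine cont_zero_off (fun t => (η (0,t,0)).2.1) (by fun_prop) (fun t ht => ?_)
    obtain ⟨c, hc⟩ := hpar (0,t,0) (by simp [ht])
    beta_reduce; rw [hc]; simp
  exact hnz (0,0,0) (Prod.ext h1 (Prod.ext h2 h3))
end

section
/- Let n ≥ 1 and let x ∈ ℝⁿ (identified with Fin n → ℝ) with x ≠ 0. Then the kernel of the linear map M_n(ℝ) → ℝⁿ sending a matrix A to the vector whose j-th component is \sum_{i=1}^n A_{ij}·x_i equals the linear span of the matrices x_i·E_{jk} − x_j·E_{ik} for 1 ≤ i, j, k ≤ n, where E_{jk} denotes the standard basis matrix with a 1 in position (j,k) and 0 elsewhere. -/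
/-- The linear map `Mₙ(ℝ) → ℝⁿ` sending a matrix `A` to the vector whose `j`-th component is
`∑ᵢ Aᵢⱼ·xᵢ` (the pointwise anchor of the action Lie algebroid `ℝⁿ ⋊ glₙ(ℝ)` at `x`). -/
noncomputable def glAnchor (n : ℕ) (x : Fin n → ℝ) :
    Matrix (Fin n) (Fin n) ℝ →ₗ[ℝ] (Fin n → ℝ) where
  toFun A := fun j => ∑ i, A i j * x i
  map_add' A B := by
    funext j
    simp [Matrix.add_apply, add_mul, Finset.sum_add_distrib]
  map_smul' c A := by
    funext j
    simp [Matrix.smul_apply, Finset.mul_sum, mul_assoc]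

/-- Let `n ≥ 1` and `x ∈ ℝⁿ` with `x ≠ 0`. Then the kernel of the linear map `Mₙ(ℝ) → ℝⁿ`,
`A ↦ (∑ᵢ Aᵢⱼ·xᵢ)ⱼ`, equals the linear span of the matrices `xᵢ·Eⱼₖ − xⱼ·Eᵢₖ` for
`1 ≤ i, j, k ≤ n`, where `Eⱼₖ` is the standard basis matrix. -/
theorem stmt_17 (n : ℕ) (hn : 1 ≤ n) (x : Fin n → ℝ) (hx : x ≠ 0) :
    LinearMap.ker (glAnchor n x) =
      Submodule.span ℝ {M : Matrix (Fin n) (Fin n) ℝ | ∃ i j k : Fin n,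
        M = x i • Matrix.single j k 1 - x j • Matrix.single i k 1} := by
  apply le_antisymm
  · intro A hA
    have hA' : ∀ j, ∑ i, A i j * x i = 0 := fun j => congrFun (LinearMap.mem_ker.mp hA) j
    obtain ⟨i₀, hi₀⟩ : ∃ i, x i ≠ 0 := by
      by_contra h; push_neg at h; exact hx (funext h)
    have key : A = ∑ i : Fin n, ∑ k : Fin n, (A i k / x i₀) •
        (x i₀ • Matrix.single i k 1 - x i • Matrix.single i₀ k 1) := by
      ext p q
      simp only [Matrix.sum_apply, Matrix.smul_apply, Matrix.sub_apply,
        Matrix.single, Matrix.of_apply, smul_eq_mul, mul_sub, mul_ite, mul_one, mul_zero]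
      rw [Finset.sum_comm]
      rw [Finset.sum_eq_single q]
      · simp only [and_true]
        rw [Finset.sum_sub_distrib]
        rw [Finset.sum_ite_eq' Finset.univ p (fun i => A i q / x i₀ * x i₀)]
        simp only [Finset.mem_univ, if_true]
        by_cases hp : i₀ = p
        · subst hp
          have : ∑ i, A i q / x i₀ * x i = (∑ i, A i q * x i) / x i₀ := by
            rw [Finset.sum_div]; congr 1; ext i; ring
          simp only [if_true, if_pos rfl]
          rw [this, hA' q]
          field_simp
          ring
        · simp only [if_neg hp]
          have : ∀ i, (if i₀ = p then A i q / x i₀ * x i else 0) = 0 := fun i => if_neg hp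
          simp [this, div_mul_cancel₀ _ hi₀]
      · intro k _ hk
        simp [hk, Ne.symm hk]
      · intro h; exact absurd (Finset.mem_univ q) h
    rw [key]
    refine Submodule.sum_mem _ fun i _ => Submodule.sum_mem _ fun k _ =>
      Submodule.smul_mem _ _ (Submodule.subset_span ⟨i₀, i, k, rfl⟩)
  · rw [Submodule.span_le]
    rintro M ⟨i, j, k, rfl⟩
    simp only [SetLike.mem_coe, LinearMap.mem_ker]
    funext q
    simp only [glAnchor, LinearMap.coe_mk, AddHom.coe_mk, Pi.zero_apply]
    simp only [Matrix.sub_apply, Matrix.smul_apply, Matrix.single, Matrix.of_apply,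
      smul_eq_mul, mul_ite, mul_one, mul_zero, sub_mul, ite_mul, zero_mul,
      Finset.sum_sub_distrib, Pi.zero_apply]
    by_cases hq : k = q
    · subst hq
      simp [Finset.sum_ite_eq' Finset.univ j, Finset.sum_ite_eq' Finset.univ i, mul_comm]
    · simp [hq]
end
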